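/- For every nonnegative integer k and every tree T on n vertices, there exists a set W of at most 2^{k+1} - 1 vertices such that every connected component of T \ W has at most n/2^k vertices. -/

import Mathlib

open SimpleGraph Set

namespace Stmt2Aux

variable {V : Type*}

/-- The set of vertices reachable from `v` by a `G`-walk staying inside `A`. -/
def comp (G : SimpleGraph V) (A : Set V) (v : V) : Set V :=
  {x | ∃ p : G.Walk v x, ∀ z ∈ p.support, z ∈ A}

variable {G : SimpleGraph V} {A B : Set V} {v x y : V}

lemma mem_comp_self (hv : v ∈ A) : v ∈ comp G A v :=
  ⟨Walk.nil, by simp [hv]⟩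

lemma comp_subset : comp G A v ⊆ A := fun x ⟨p, hp⟩ => hp x p.end_mem_support

lemma start_mem_of_mem_comp (h : x ∈ comp G A v) : v ∈ A := by
  obtain ⟨p, hp⟩ := h; exact hp v p.start_mem_support

lemma comp_eq_empty (hv : v ∉ A) : comp G A v = ∅ :=
  Set.eq_empty_of_forall_notMem fun x hx => hv (start_mem_of_mem_comp hx)

lemma mem_comp_comm : x ∈ comp G A v ↔ v ∈ comp G A x := by
  constructor <;> rintro ⟨p, hp⟩ <;>
    exact ⟨p.reverse, fun z hz => hp z (by simpa [Walk.support_reverse] using hz)⟩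

lemma mem_comp_trans (hx : x ∈ comp G A v) (hy : y ∈ comp G A x) : y ∈ comp G A v := by
  obtain ⟨p, hp⟩ := hx
  obtain ⟨q, hq⟩ := hy
  exact ⟨p.append q, fun z hz => by
    rcases (Walk.mem_support_append_iff p q).mp hz with h | h
    · exact hp z h
    · exact hq z h⟩

lemma comp_eq_of_mem (hx : x ∈ comp G A v) : comp G A x = comp G A v := by
  ext z
  exact ⟨fun hz => mem_comp_trans hx hz, fun hz => mem_comp_trans (mem_comp_comm.mp hx) hz⟩

lemma support_subset_comp (p : G.Walk v x) (hp : ∀ z ∈ p.support, z ∈ A) :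
    ∀ z ∈ p.support, z ∈ comp G A v := by
  classical
  intro z hz
  exact ⟨p.takeUntil z hz, fun w hw => hp w (p.support_takeUntil_subset hz hw)⟩

lemma comp_subset_comp (h : comp G A v ⊆ B) : comp G A v ⊆ comp G B v := by
  rintro x ⟨p, hp⟩
  exact ⟨p, fun z hz => h (support_subset_comp p hp z hz)⟩

lemma comp_comp (hx : x ∈ comp G A v) : comp G (comp G A v) x = comp G A v := by
  apply Set.Subset.antisymm
  · intro z hz
    have h1 : z ∈ comp G A x := by
      obtain ⟨p, hp⟩ := hz
      exact ⟨p, fun w hw => comp_subset (hp w hw)⟩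
    rw [← comp_eq_of_mem hx]; exact h1
  · intro z hz
    have hzx : z ∈ comp G A x := by rw [comp_eq_of_mem hx]; exact hz
    obtain ⟨p, hp⟩ := hzx
    refine ⟨p, fun w hw => ?_⟩
    have := support_subset_comp p hp w hw
    rwa [comp_eq_of_mem hx] at this

lemma reachable_induce_iff {S : Set V} (a b : S) :
    (G.induce S).Reachable a b ↔ (b : V) ∈ comp G S (a : V) := by
  constructor
  · rintro ⟨p⟩
    refine ⟨p.map (SimpleGraph.Embedding.induce S).toHom, fun z hz => ?_⟩
    erw [Walk.support_map] at hz
    obtain ⟨zz, _, rfl⟩ := List.mem_map.mp hz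
    exact zz.2
  · rintro ⟨p, hp⟩
    have key : ∀ (u w : V) (q : G.Walk u w) (hq : ∀ z ∈ q.support, z ∈ S)
        (hu : u ∈ S) (hw : w ∈ S), (G.induce S).Reachable ⟨u, hu⟩ ⟨w, hw⟩ := by
      intro u w q
      induction q with
      | nil => intro _ _ _; rfl
      | @cons c d e h q ih =>
        intro hq hu hw
        have hd : d ∈ S := hq d (by simp [Walk.support_cons])
        have hadj : (G.induce S).Adj ⟨c, hu⟩ ⟨d, hd⟩ := h
        exact hadj.reachable.trans (ih (fun z hz => hq z (by simp [Walk.support_cons, hz])) hd hw)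
    exact key _ _ p hp a.2 b.2

lemma image_supp_eq (S : Set V) (hv : v ∈ S) :
    Subtype.val '' ((G.induce S).connectedComponentMk ⟨v, hv⟩).supp = comp G S v := by
  ext x
  constructor
  · rintro ⟨⟨x, hx⟩, hmem, rfl⟩
    rw [ConnectedComponent.mem_supp_iff, ConnectedComponent.eq] at hmem
    exact (reachable_induce_iff _ _).mp hmem.symm
  · intro hx
    have hxS : x ∈ S := comp_subset hx
    refine ⟨⟨x, hxS⟩, ?_, rfl⟩
    rw [ConnectedComponent.mem_supp_iff, ConnectedComponent.eq]
    exact ((reachable_induce_iff (⟨v, hv⟩ : S) ⟨x, hxS⟩).mpr hx).symm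


lemma takeUntil_avoids [DecidableEq V] {z w u : V} (p : G.Walk z w) (hp : p.IsPath)
    (hu : u ∈ p.support) (hne : u ≠ w) : w ∉ (p.takeUntil u hu).support := by
  intro hw
  have hnodup := hp.support_nodup
  rw [← p.take_spec hu, Walk.support_append] at hnodup
  exact (List.disjoint_of_nodup_append hnodup) hw (Walk.end_mem_tail_support_of_ne hne _)

lemma exists_centroid [Fintype V] (hT : G.IsTree) (S : Set V) (hS : S.Nonempty)
    (hconn : ∀ a ∈ S, comp G S a = S) :
    ∃ w ∈ S, ∀ x, 2 * (comp G (S \ {w}) x).ncard ≤ S.ncard := by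
  classical
  have huniq : ∀ {a b : V} (p q : G.Walk a b), p.IsPath → q.IsPath → p = q := by
    intro a b p q hp hq
    exact congrArg Subtype.val (hT.IsAcyclic.path_unique ⟨p, hp⟩ ⟨q, hq⟩)
  have hpath : ∀ a ∈ S, ∀ b ∈ S, ∃ p : G.Walk a b, p.IsPath ∧ ∀ z ∈ p.support, z ∈ S := by
    intro a ha b hb
    have hb' : b ∈ comp G S a := by rw [hconn a ha]; exact hb
    obtain ⟨p, hp⟩ := hb'
    exact ⟨p.bypass, p.bypass_isPath, fun z hz => hp z (p.support_bypass_subset hz)⟩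
  set F : V → ℕ := fun a => Finset.univ.sup fun x => (comp G (S \ {a}) x).ncard with hF
  obtain ⟨w, hwS', hwmin⟩ := Finset.exists_min_image S.toFinset F (Set.toFinset_nonempty.mpr hS)
  rw [Set.mem_toFinset] at hwS'
  refine ⟨w, hwS', ?_⟩
  by_contra hcon
  push_neg at hcon
  obtain ⟨x₀, hx₀⟩ := hcon
  set C : Set V := comp G (S \ {w}) x₀ with hC
  have hCpos : 0 < C.ncard := by omega
  have hCS : C ⊆ S \ {w} := comp_subset
  have hCle : C.ncard ≤ S.ncard :=
    Set.ncard_le_ncard (hCS.trans Set.diff_subset) S.toFinite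
  have hx₀SW : x₀ ∈ S \ {w} := by
    by_contra h
    have he : C = ∅ := by rw [hC]; exact comp_eq_empty h
    rw [he, Set.ncard_empty] at hCpos
    exact lt_irrefl 0 hCpos
  have hwx₀ : w ≠ x₀ := fun h => hx₀SW.2 h.symm
  obtain ⟨P, hPpath, hPS⟩ := hpath w hwS' x₀ hx₀SW.1
  obtain ⟨u, hadj, q, rfl⟩ := Walk.exists_eq_cons_of_ne hwx₀ P
  rw [Walk.cons_isPath_iff] at hPpath
  obtain ⟨hqpath, hwq⟩ := hPpath
  have hqS : ∀ z ∈ q.support, z ∈ S \ {w} := fun z hz =>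
    ⟨hPS z (by simp [Walk.support_cons, hz]), fun h => hwq (h ▸ hz)⟩
  have hux₀ : x₀ ∈ comp G (S \ {w}) u := ⟨q, hqS⟩
  have huC : u ∈ C := mem_comp_comm.mpr hux₀
  have hCu : comp G (S \ {w}) u = C := comp_eq_of_mem huC
  have huSW : u ∈ S \ {w} := hCS huC
  have huS : u ∈ S := huSW.1
  have hunew : u ≠ w := fun h => huSW.2 h
  -- KEY: every path from w to a vertex of C passes through u
  have key : ∀ (x : V), x ∈ C → ∀ (p : G.Walk w x), p.IsPath → u ∈ p.support := by
    intro x hxC p hp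
    have hx : x ∈ comp G (S \ {w}) u := by rw [hCu]; exact hxC
    obtain ⟨q₀, hq₀⟩ := hx
    have hbS : ∀ z ∈ q₀.bypass.support, z ∈ S \ {w} :=
      fun z hz => hq₀ z (q₀.support_bypass_subset hz)
    have hwodd : w ∉ q₀.bypass.support := fun h => (hbS w h).2 rfl
    have hcons : (Walk.cons hadj q₀.bypass).IsPath :=
      (Walk.cons_isPath_iff _ _).mpr ⟨q₀.bypass_isPath, hwodd⟩
    rw [huniq p (Walk.cons hadj q₀.bypass) hp hcons, Walk.support_cons]
    exact List.mem_cons_of_mem _ q₀.bypass.start_mem_support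
  have hFw : C.ncard ≤ F w :=
    Finset.le_sup (f := fun x => (comp G (S \ {w}) x).ncard) (Finset.mem_univ x₀)
  have hstep : ∀ x : V, (comp G (S \ {u}) x).ncard < C.ncard := by
    intro x
    by_cases hx : x ∈ S \ {u}
    · by_cases hwE : w ∈ comp G (S \ {u}) x
      · have hsub : comp G (S \ {u}) x ⊆ S \ C := by
          intro z hz
          refine ⟨(comp_subset hz).1, fun hzC => ?_⟩
          have hz' : z ∈ comp G (S \ {u}) w := by rw [comp_eq_of_mem hwE]; exact hz
          obtain ⟨r, hr⟩ := hz'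
          have hrs : ∀ t ∈ r.bypass.support, t ∈ S \ {u} :=
            fun t ht => hr t (r.support_bypass_subset ht)
          exact (hrs u (key z hzC r.bypass r.bypass_isPath)).2 rfl
        calc (comp G (S \ {u}) x).ncard ≤ (S \ C).ncard :=
              Set.ncard_le_ncard hsub (S \ C).toFinite
          _ = S.ncard - C.ncard := Set.ncard_diff (hCS.trans Set.diff_subset) C.toFinite
          _ < C.ncard := by omega
      · have hsub : comp G (S \ {u}) x ⊆ C \ {u} := by
          intro z hz
          have hzS : z ∈ S := (comp_subset hz).1
          have hzu : z ≠ u := fun h => (comp_subset hz).2 h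
          obtain ⟨p, hppath, hpS⟩ := hpath z hzS w hwS'
          have hup : u ∈ p.support := by
            by_contra hnu
            have hwz : w ∈ comp G (S \ {u}) z :=
              ⟨p, fun t ht => ⟨hpS t ht, fun he => hnu (he ▸ ht)⟩⟩
            rw [comp_eq_of_mem hz] at hwz
            exact hwE hwz
          have hwna : w ∉ (p.takeUntil u hup).support := takeUntil_avoids p hppath hup hunew
          have hzu' : u ∈ comp G (S \ {w}) z :=
            ⟨p.takeUntil u hup, fun t ht =>
              ⟨hpS t (p.support_takeUntil_subset hup ht), fun he => hwna (he ▸ ht)⟩⟩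
          exact ⟨by rw [← hCu]; exact mem_comp_comm.mp hzu', hzu⟩
        calc (comp G (S \ {u}) x).ncard ≤ (C \ {u}).ncard :=
              Set.ncard_le_ncard hsub (C \ {u}).toFinite
          _ < C.ncard := Set.ncard_diff_singleton_lt_of_mem huC C.toFinite
    · rw [comp_eq_empty hx, Set.ncard_empty]; exact hCpos
  have hFu : F u < F w := by
    have h1 : F u < C.ncard := by
      rw [hF]
      exact (Finset.sup_lt_iff hCpos).mpr fun b _ => hstep b
    exact lt_of_lt_of_le h1 hFw
  exact absurd (hwmin u (Set.mem_toFinset.mpr huS)) (not_le.mpr hFu)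


end Stmt2Aux

open Stmt2Aux

theorem stmt_2 {V : Type*} [Fintype V] (G : SimpleGraph V) (hT : G.IsTree) (k : ℕ) :
    ∃ W : Finset V, W.card ≤ 2 ^ (k + 1) - 1 ∧
      ∀ c : (G.induce {u : V | u ∉ W}).ConnectedComponent,
        2 ^ k * c.supp.ncard ≤ Fintype.card V := by
  classical
  induction k with
  | zero =>
    refine ⟨∅, by simp, fun c => ?_⟩
    rw [pow_zero, one_mul,
      ← Set.ncard_image_of_injective c.supp Subtype.val_injective]
    calc (Subtype.val '' c.supp).ncard ≤ (Set.univ : Set V).ncard :=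
          Set.ncard_le_ncard (Set.subset_univ _) Set.finite_univ
      _ = Fintype.card V := by rw [Set.ncard_univ, Nat.card_eq_fintype_card]
  | succ k IH =>
    obtain ⟨W, hWcard, hWgood⟩ := IH
    set n := Fintype.card V with hn
    set S : Set V := {u : V | u ∉ W} with hSdef
    haveI : Fintype (G.induce S).ConnectedComponent := Fintype.ofFinite _
    set A : (G.induce S).ConnectedComponent → Set V :=
      fun c => Subtype.val '' c.supp with hA
    set bigs : Finset (G.induce S).ConnectedComponent :=
      Finset.univ.filter (fun c => n < 2 ^ (k + 1) * (A c).ncard) with hbigs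
    -- supp sizes vs A sizes
    have hAcard : ∀ c, (A c).ncard = c.supp.ncard := fun c =>
      Set.ncard_image_of_injective c.supp Subtype.val_injective
    -- disjointness
    have hdisj : ∀ c ∈ bigs, ∀ d ∈ bigs, c ≠ d →
        Disjoint (A c).toFinset (A d).toFinset := by
      intro c _ d _ hcd
      rw [Finset.disjoint_left]
      intro a hac had
      rw [Set.mem_toFinset] at hac had
      obtain ⟨aa, haa, rfl⟩ := hac
      obtain ⟨bb, hbb, hval⟩ := had
      rw [ConnectedComponent.mem_supp_iff] at haa hbb
      exact hcd (by rw [← haa, ← hbb, Subtype.ext hval])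
    have hsum : ∑ c ∈ bigs, (A c).ncard ≤ n := by
      have h1 : ∀ c ∈ bigs, (A c).ncard = (A c).toFinset.card := by
        intro c _; rw [Set.ncard_eq_toFinset_card']
      rw [Finset.sum_congr rfl h1, ← Finset.card_biUnion hdisj]
      exact (Finset.card_le_univ _).trans (le_of_eq (Finset.card_univ))
    have hAle : ∀ c, (A c).ncard ≤ n := fun c => by
      calc (A c).ncard ≤ (Set.univ : Set V).ncard :=
            Set.ncard_le_ncard (Set.subset_univ _) Set.finite_univ
        _ = n := by rw [Set.ncard_univ, Nat.card_eq_fintype_card]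
    have hbigcard : bigs.card ≤ 2 ^ (k + 1) - 1 := by
      rcases bigs.eq_empty_or_nonempty with he | hne
      · simp [he]
      · have hn0 : 0 < n := by
          obtain ⟨c, hc⟩ := hne
          have hbig := (Finset.mem_filter.mp hc).2
          have h2 := hAle c
          by_contra h; push_neg at h
          have h0 : n = 0 := by omega
          have hz : (A c).ncard = 0 := by omega
          rw [hz, mul_zero, h0] at hbig
          exact lt_irrefl 0 hbig
        have h2 : bigs.card * n < 2 ^ (k + 1) * n := by
          calc bigs.card * n = ∑ _c ∈ bigs, n := by
                rw [Finset.sum_const, smul_eq_mul]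
            _ < ∑ c ∈ bigs, 2 ^ (k + 1) * (A c).ncard :=
              Finset.sum_lt_sum_of_nonempty hne
                (fun c hc => (Finset.mem_filter.mp hc).2)
            _ = 2 ^ (k + 1) * ∑ c ∈ bigs, (A c).ncard := by rw [Finset.mul_sum]
            _ ≤ 2 ^ (k + 1) * n := Nat.mul_le_mul_left _ hsum
        have := Nat.lt_of_mul_lt_mul_right h2
        omega
    -- centroids
    have hcent : ∀ c : (G.induce S).ConnectedComponent, ∃ wc : V, c ∈ bigs →
        wc ∈ A c ∧ ∀ x, 2 * (comp G (A c \ {wc}) x).ncard ≤ (A c).ncard := by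
      intro c
      obtain ⟨⟨v, hv⟩, hrep⟩ := c.exists_rep
      by_cases hc : c ∈ bigs
      · have hAc : A c = comp G S v := by
          rw [← hrep]; exact image_supp_eq S hv
        obtain ⟨wc, hw1, hw2⟩ := exists_centroid hT (comp G S v)
          ⟨v, mem_comp_self hv⟩ (fun a ha => comp_comp ha)
        rw [hAc]
        exact ⟨wc, fun _ => ⟨hw1, hw2⟩⟩
      · exact ⟨v, fun h => absurd h hc⟩
    choose wf hwf using hcent
    refine ⟨W ∪ bigs.image wf, ?_, ?_⟩
    · have h1 : (W ∪ bigs.image wf).card ≤ W.card + bigs.card :=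
        (Finset.card_union_le _ _).trans
          (Nat.add_le_add_left (Finset.card_image_le) _)
      have hp : 2 ^ (k + 1 + 1) = 2 ^ (k + 1) * 2 := pow_succ 2 (k + 1)
      have hp1 : 1 ≤ 2 ^ (k + 1) := Nat.one_le_two_pow
      omega
    · set S' : Set V := {u : V | u ∉ W ∪ bigs.image wf} with hS'
      intro c'
      obtain ⟨⟨v, hv⟩, hrep⟩ := c'.exists_rep
      have hvW' : v ∉ W ∪ bigs.image wf := hv
      have hvW : v ∉ W := fun h => hvW' (Finset.mem_union_left _ h)
      have hvS : v ∈ S := hvW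
      have hsupp : Subtype.val '' c'.supp = comp G S' v := by
        rw [← hrep]; exact image_supp_eq S' hv
      have hcard' : c'.supp.ncard = (comp G S' v).ncard := by
        rw [← Set.ncard_image_of_injective c'.supp Subtype.val_injective, hsupp]
      set c : (G.induce S).ConnectedComponent :=
        (G.induce S).connectedComponentMk ⟨v, hvS⟩ with hc
      have hAc : A c = comp G S v := image_supp_eq S hvS
      have hmono : comp G S' v ⊆ comp G S v := by
        apply comp_subset_comp
        intro z hz
        have hzS' : z ∈ S' := comp_subset hz
        exact fun h => hzS' (Finset.mem_union_left _ h)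
      have hIH : 2 ^ k * (A c).ncard ≤ n := by
        rw [hAcard c]; exact hWgood c
      rw [hcard']
      by_cases hcbig : c ∈ bigs
      · obtain ⟨hw1, hw2⟩ := hwf c hcbig
        have hwfW' : wf c ∈ W ∪ bigs.image wf :=
          Finset.mem_union_right _ (Finset.mem_image_of_mem _ hcbig)
        have hsub : comp G S' v ⊆ A c \ {wf c} := by
          intro z hz
          refine ⟨hAc ▸ hmono hz, fun hzw => ?_⟩
          have hzS' : z ∈ S' := comp_subset hz
          rw [Set.mem_singleton_iff] at hzw
          exact hzS' (hzw ▸ hwfW')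
        have hsub2 : comp G S' v ⊆ comp G (A c \ {wf c}) v := comp_subset_comp hsub
        have hle : (comp G S' v).ncard ≤ (comp G (A c \ {wf c}) v).ncard :=
          Set.ncard_le_ncard hsub2 (Set.toFinite _)
        have h2 := hw2 v
        calc 2 ^ (k + 1) * (comp G S' v).ncard
            = 2 ^ k * (2 * (comp G S' v).ncard) := by ring
          _ ≤ 2 ^ k * (2 * (comp G (A c \ {wf c}) v).ncard) := by
              exact Nat.mul_le_mul_left _ (Nat.mul_le_mul_left _ hle)
          _ ≤ 2 ^ k * (A c).ncard := Nat.mul_le_mul_left _ h2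
          _ ≤ n := hIH
      · have hsmall : 2 ^ (k + 1) * (A c).ncard ≤ n := by
          have := Finset.mem_filter.not.mp hcbig
          simp only [Finset.mem_univ, true_and] at this
          omega
        have hle : (comp G S' v).ncard ≤ (A c).ncard := by
          rw [hAc]
          exact Set.ncard_le_ncard hmono (Set.toFinite _)
        calc 2 ^ (k + 1) * (comp G S' v).ncard ≤ 2 ^ (k + 1) * (A c).ncard :=
              Nat.mul_le_mul_left _ hle
          _ ≤ n := hsmall
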